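/- Let G be a group with subgroups B ⊆ B_I and P_I such that: (i) B_I P_I = ∐_{g ∈ B_I/B} gBP (disjoint union), and (ii) the M[G]-module C^∞(G/P_I, M) is generated by the characteristic function χ_{B_I P_I}. Then the M[G]-module homomorphism H : C_c^∞(G/B, M) → C^∞(G/P, M), φ ↦ Σ_{g∈G/B} φ(g)·g(χ_{BP}), satisfies H(χ_{B_I}) = χ_{B_I P_I}, and the induced map H_I : C_c^∞(G/B_I, M) → C^∞(G/P_I, M) is a surjective homomorphism of M[G]-modules. -/

import Mathlib

open scoped Pointwise Classical

/-- `H : C_c^∞(G/B, M) → C^∞(G/P, M)`, `φ ↦ Σ_{g∈G/B} φ(g)·g(χ_{BP})`: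
compactly supported functions on `G/B` are finitely supported `M`-valued
functions, and `(g χ_{BP})(y) = χ_{BP}(g⁻¹y)`. -/
noncomputable def convMap {G : Type*} [Group G] (M : Type*) [CommRing M]
    (B P : Subgroup G) (φ : (G ⧸ B) →₀ M) : (G ⧸ P) → M := fun y =>
  ∑ x ∈ φ.support,
    if (Quotient.out x)⁻¹ • y ∈ (QuotientGroup.mk '' ((B : Set G) * (P : Set G)) : Set (G ⧸ P))
    then φ x else 0

section Aux

variable {G : Type*} [Group G] {B P : Subgroup G}

lemma aux_BP_mul_left {b w : G} (hb : b ∈ B) :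
    b * w ∈ (B : Set G) * (P : Set G) ↔ w ∈ (B : Set G) * (P : Set G) := by
  constructor
  · rintro ⟨b', hb', p, hp, h⟩
    have h' : b' * p = b * w := h
    refine ⟨b⁻¹ * b', mul_mem (inv_mem hb) hb', p, hp, ?_⟩
    show b⁻¹ * b' * p = w
    rw [mul_assoc, h']; group
  · rintro ⟨b', hb', p, hp, h⟩
    have h' : b' * p = w := h
    refine ⟨b * b', mul_mem hb hb', p, hp, ?_⟩
    show b * b' * p = b * w
    rw [mul_assoc, h']

lemma aux_BP_mul_right {p w : G} (hp : p ∈ P) :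
    w * p ∈ (B : Set G) * (P : Set G) ↔ w ∈ (B : Set G) * (P : Set G) := by
  constructor
  · rintro ⟨b', hb', p', hp', h⟩
    have h' : b' * p' = w * p := h
    refine ⟨b', hb', p' * p⁻¹, mul_mem hp' (inv_mem hp), ?_⟩
    show b' * (p' * p⁻¹) = w
    rw [← mul_assoc, h']; group
  · rintro ⟨b', hb', p', hp', h⟩
    have h' : b' * p' = w := h
    refine ⟨b', hb', p' * p, mul_mem hp' hp, ?_⟩
    show b' * (p' * p) = w * p
    rw [← mul_assoc, h']

/-- membership in image in `G ⧸ P` of a right-`P`-stable set. -/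
lemma aux_mk_mem_image_iff {S : Set G} (hS : ∀ s ∈ S, ∀ p ∈ P, s * p ∈ S) (w : G) :
    (QuotientGroup.mk w : G ⧸ P) ∈ QuotientGroup.mk '' S ↔ w ∈ S := by
  constructor
  · rintro ⟨z, hz, hzw⟩
    have hp : z⁻¹ * w ∈ P := QuotientGroup.eq.mp hzw
    have := hS z hz _ hp
    rwa [← mul_assoc, mul_inv_cancel, one_mul] at this
  · exact fun h => ⟨w, h, rfl⟩

lemma aux_BP_stable : ∀ s ∈ (B : Set G) * (P : Set G), ∀ p ∈ P, s * p ∈ (B : Set G) * (P : Set G) :=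
  fun s hs p hp => (aux_BP_mul_right hp).mpr hs

lemma aux_cond_iff (u : G) (y : G ⧸ P) :
    u⁻¹ • y ∈ (QuotientGroup.mk '' ((B : Set G) * (P : Set G)) : Set (G ⧸ P)) ↔
      u⁻¹ * Quotient.out y ∈ (B : Set G) * (P : Set G) := by
  conv_lhs => rw [← Quotient.out_eq y]
  exact aux_mk_mem_image_iff aux_BP_stable _

lemma convMap_apply (M : Type*) [CommRing M] (φ : (G ⧸ B) →₀ M) (y : G ⧸ P) :
    convMap M B P φ y =
      φ.sum fun x m =>
        if (Quotient.out x)⁻¹ * Quotient.out y ∈ (B : Set G) * (P : Set G) then m else 0 := by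
  refine Finset.sum_congr rfl fun x _ => ?_
  rw [aux_cond_iff]

/-- value of out of mk. -/
lemma aux_out_cond (g w : G) :
    (Quotient.out (QuotientGroup.mk g : G ⧸ B))⁻¹ * w ∈ (B : Set G) * (P : Set G) ↔
      g⁻¹ * w ∈ (B : Set G) * (P : Set G) := by
  have h : g⁻¹ * Quotient.out (QuotientGroup.mk g : G ⧸ B) ∈ B :=
    QuotientGroup.eq.mp (Quotient.out_eq _).symm
  set b := g⁻¹ * Quotient.out (QuotientGroup.mk g : G ⧸ B) with hb
  have hout : Quotient.out (QuotientGroup.mk g : G ⧸ B) = g * b := by rw [hb]; group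
  rw [hout, show (g * b)⁻¹ * w = b⁻¹ * (g⁻¹ * w) by group, aux_BP_mul_left (inv_mem h)]

variable (M : Type*) [CommRing M]

lemma convMap_add (φ ψ : (G ⧸ B) →₀ M) :
    convMap M B P (φ + ψ) = convMap M B P φ + convMap M B P ψ := by
  funext y
  simp only [Pi.add_apply, convMap_apply]
  exact Finsupp.sum_add_index' (fun x => by simp) (fun x m n => by split_ifs <;> simp)

lemma convMap_smul (c : M) (φ : (G ⧸ B) →₀ M) :
    convMap M B P (c • φ) = c • convMap M B P φ := by
  funext y
  simp only [Pi.smul_apply, convMap_apply, smul_eq_mul]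
  rw [Finsupp.sum_smul_index (fun i => by simp), Finsupp.mul_sum]
  refine Finsupp.sum_congr fun x _ => ?_
  split_ifs <;> simp

lemma convMap_single (g : G) (m : M) :
    convMap M B P (Finsupp.single (QuotientGroup.mk g : G ⧸ B) m) =
      fun y => if g⁻¹ * Quotient.out y ∈ (B : Set G) * (P : Set G) then m else 0 := by
  funext y
  rw [convMap_apply, Finsupp.sum_single_index (by simp), aux_out_cond]

end Aux

/-- given (i) `B_I P_I = ∐_{g∈B_I/B} gBP` and (ii) that
`C^∞(G/P_I, M)` is generated as an `M[G]`-module by `χ_{B_I P_I}`, the map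
`H` satisfies `H(χ_{B_I}) = χ_{B_I P_I}`, and the induced map
`H_I : C_c^∞(G/B_I, M) → C^∞(G/P_I, M)` is additive, `G`-equivariant and
surjective (onto locally constant functions). -/
theorem H_of_chi_and_HI_surjective
    {G : Type*} [Group G] [TopologicalSpace G] [IsTopologicalGroup G]
    (M : Type*) [CommRing M]
    (B BI P PI : Subgroup G) (hBBI : B ≤ BI) (hPPI : P ≤ PI)
    (S : Finset G) (hS : (BI : Set G) = ⋃ g ∈ S, g • (B : Set G))
    (hSdisj : ∀ g₁ ∈ S, ∀ g₂ ∈ S,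
      (QuotientGroup.mk g₁ : G ⧸ B) = QuotientGroup.mk g₂ → g₁ = g₂)
    (hdisjoint : ∀ g₁ ∈ S, ∀ g₂ ∈ S,
      ((g₁ • ((B : Set G) * (P : Set G))) ∩ (g₂ • ((B : Set G) * (P : Set G)))).Nonempty →
        g₁ = g₂)
    (hunion : (BI : Set G) * (PI : Set G) = ⋃ g ∈ S, g • ((B : Set G) * (P : Set G)))
    (hgen : ∀ f : G ⧸ PI → M, IsLocallyConstant f →
      f ∈ Submodule.span M
        {h : G ⧸ PI → M | ∃ g : G,
          h = Set.indicator (QuotientGroup.mk '' (g • ((BI : Set G) * (PI : Set G)))) 1}) :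
    (convMap M B P (∑ g ∈ S, Finsupp.single (QuotientGroup.mk g : G ⧸ B) (1 : M)) =
      Set.indicator (QuotientGroup.mk '' ((BI : Set G) * (PI : Set G)) : Set (G ⧸ P)) 1) ∧
    (∀ φ ψ : (G ⧸ BI) →₀ M, convMap M BI PI (φ + ψ) = convMap M BI PI φ + convMap M BI PI ψ) ∧
    (∀ (g : G) (φ : (G ⧸ BI) →₀ M),
      convMap M BI PI (Finsupp.mapDomain (fun z : G ⧸ BI => g • z) φ) =
        fun y => convMap M BI PI φ (g⁻¹ • y)) ∧
    (∀ f : G ⧸ PI → M, IsLocallyConstant f → ∃ φ : (G ⧸ BI) →₀ M, convMap M BI PI φ = f) := by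
  -- BI*PI is right-P-stable since P ≤ PI ; it is right-PI-stable
  have hstabPI : ∀ s ∈ (BI : Set G) * (PI : Set G), ∀ p ∈ PI,
      s * p ∈ (BI : Set G) * (PI : Set G) := aux_BP_stable
  have hstabP : ∀ s ∈ (BI : Set G) * (PI : Set G), ∀ p ∈ P,
      s * p ∈ (BI : Set G) * (PI : Set G) := fun s hs p hp => hstabPI s hs p (hPPI hp)
  refine ⟨?_, fun φ ψ => convMap_add M φ ψ, ?_, ?_⟩
  · -- H(χ_{B_I}) = χ_{B_I P_I}
    -- additivity over the finite sum
    have hadd : convMap M B P (∑ g ∈ S, Finsupp.single (QuotientGroup.mk g : G ⧸ B) (1 : M)) =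
        ∑ g ∈ S, convMap M B P (Finsupp.single (QuotientGroup.mk g : G ⧸ B) (1 : M)) := by
      let F : ((G ⧸ B) →₀ M) →+ ((G ⧸ P) → M) :=
        AddMonoidHom.mk' (convMap M B P) (convMap_add M)
      exact map_sum F _ S
    rw [hadd]
    funext y
    simp only [Finset.sum_apply, convMap_single]
    have hy : y ∈ (QuotientGroup.mk '' ((BI : Set G) * (PI : Set G)) : Set (G ⧸ P)) ↔
        Quotient.out y ∈ (BI : Set G) * (PI : Set G) := by
      have := aux_mk_mem_image_iff hstabP (Quotient.out y)
      rwa [show (QuotientGroup.mk (Quotient.out y) : G ⧸ P) = y from Quotient.out_eq y] at this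
    rw [Set.indicator_apply, Pi.one_apply, hy]
    set w := Quotient.out y with hw
    by_cases hmem : w ∈ (BI : Set G) * (PI : Set G)
    · rw [if_pos hmem]
      rw [hunion, Set.mem_iUnion₂] at hmem
      obtain ⟨g₀, hg₀S, hg₀⟩ := hmem
      rw [Finset.sum_eq_single_of_mem g₀ hg₀S]
      · rw [if_pos]
        rwa [Set.mem_smul_set_iff_inv_smul_mem, smul_eq_mul] at hg₀
      · intro g hgS hne
        rw [if_neg]
        intro hg
        exact hne (hdisjoint g hgS g₀ hg₀S
          ⟨w, by rwa [Set.mem_smul_set_iff_inv_smul_mem, smul_eq_mul], hg₀⟩)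
    · rw [if_neg hmem]
      refine Finset.sum_eq_zero fun g hgS => ?_
      rw [if_neg]
      intro hg
      apply hmem
      rw [hunion, Set.mem_iUnion₂]
      exact ⟨g, hgS, by rwa [Set.mem_smul_set_iff_inv_smul_mem, smul_eq_mul]⟩
  · -- equivariance
    intro g φ
    funext y
    rw [convMap_apply, convMap_apply]
    rw [Finsupp.sum_mapDomain_index (fun x => by simp)
      (fun x m n => by split_ifs <;> simp)]
    refine Finsupp.sum_congr fun x _ => ?_
    congr 1
    -- conditions are equivalent
    have key : (Quotient.out (g • x))⁻¹ * Quotient.out y ∈ (BI : Set G) * (PI : Set G) ↔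
        (Quotient.out x)⁻¹ * Quotient.out (g⁻¹ • y) ∈ (BI : Set G) * (PI : Set G) := by
      -- out (g • x) = g * out x * b, b ∈ BI
      have h1 : (g • x) = QuotientGroup.mk (g * Quotient.out x) := by
        conv_lhs => rw [← Quotient.out_eq x]
        rfl
      have hb : (g * Quotient.out x)⁻¹ * Quotient.out (g • x) ∈ BI := by
        apply QuotientGroup.eq.mp
        rw [← h1]
        exact (Quotient.out_eq _).symm
      set b := (g * Quotient.out x)⁻¹ * Quotient.out (g • x) with hbdef
      have houtx : Quotient.out (g • x) = g * Quotient.out x * b := by rw [hbdef]; group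
      have h2 : (g⁻¹ • y) = QuotientGroup.mk (g⁻¹ * Quotient.out y) := by
        conv_lhs => rw [← Quotient.out_eq y]
        rfl
      have hp : (g⁻¹ * Quotient.out y)⁻¹ * Quotient.out (g⁻¹ • y) ∈ PI := by
        apply QuotientGroup.eq.mp
        rw [← h2]
        exact (Quotient.out_eq _).symm
      set p := (g⁻¹ * Quotient.out y)⁻¹ * Quotient.out (g⁻¹ • y) with hpdef
      have houty : Quotient.out (g⁻¹ • y) = g⁻¹ * Quotient.out y * p := by rw [hpdef]; group
      rw [houtx, houty,
        show (g * Quotient.out x * b)⁻¹ * Quotient.out y =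
          b⁻¹ * ((Quotient.out x)⁻¹ * (g⁻¹ * Quotient.out y)) by group,
        show (Quotient.out x)⁻¹ * (g⁻¹ * Quotient.out y * p) =
          ((Quotient.out x)⁻¹ * (g⁻¹ * Quotient.out y)) * p by group,
        aux_BP_mul_left (inv_mem hb), aux_BP_mul_right hp]
    rw [key]
  · -- surjectivity
    intro f hf
    let L : ((G ⧸ BI) →₀ M) →ₗ[M] ((G ⧸ PI) → M) :=
      { toFun := convMap M BI PI
        map_add' := convMap_add M
        map_smul' := convMap_smul M }
    have hsub : {h : G ⧸ PI → M | ∃ g : G,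
        h = Set.indicator (QuotientGroup.mk '' (g • ((BI : Set G) * (PI : Set G)))) 1} ⊆
        LinearMap.range L := by
      rintro h ⟨g, rfl⟩
      refine ⟨Finsupp.single (QuotientGroup.mk g : G ⧸ BI) 1, ?_⟩
      show convMap M BI PI _ = _
      rw [convMap_single]
      funext y
      rw [Set.indicator_apply]
      have hstab : ∀ s ∈ g • ((BI : Set G) * (PI : Set G)), ∀ p ∈ PI,
          s * p ∈ g • ((BI : Set G) * (PI : Set G)) := by
        rintro s ⟨t, ht, rfl⟩ p hp
        exact ⟨t * p, hstabPI t ht p hp, by simp [smul_eq_mul, mul_assoc]⟩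
      have hy : y ∈ (QuotientGroup.mk '' (g • ((BI : Set G) * (PI : Set G))) : Set (G ⧸ PI)) ↔
          Quotient.out y ∈ g • ((BI : Set G) * (PI : Set G)) := by
        have := aux_mk_mem_image_iff hstab (Quotient.out y)
        rwa [show (QuotientGroup.mk (Quotient.out y) : G ⧸ PI) = y from Quotient.out_eq y] at this
      simp only [Pi.one_apply, hy, Set.mem_smul_set_iff_inv_smul_mem, smul_eq_mul]
    have := (Submodule.span_le.mpr hsub) (hgen f hf)
    obtain ⟨φ, hφ⟩ := this
    exact ⟨φ, hφ⟩
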